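/- Let G = (S ∪ K, E) be a split graph with independent set S and clique K such that ω(G) = |K|. Then ⌈ω(G)/2⌉ ≤ Tr₂(G) ≤ ⌈ω(G)/2⌉ + 1. -/
import Mathlib

open SimpleGraph

def TwoTransPart {V : Type*} (G : SimpleGraph V) (k : ℕ) (P : Fin k → Set V) : Prop :=
  (∀ i, (P i).Nonempty) ∧ (∀ v, ∃! i, v ∈ P i) ∧
    ∀ i j : Fin k, i < j → ∀ v ∈ P j,
      ∃ u w, u ∈ P i ∧ w ∈ P i ∧ u ≠ w ∧ G.Adj u v ∧ G.Adj w v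

/-- The 2-transitivity `Tr₂(G)`: the maximum size of a 2-transitive partition of `G`. -/
noncomputable def tr2 {V : Type*} (G : SimpleGraph V) : ℕ :=
  sSup {k | ∃ P : Fin k → Set V, TwoTransPart G k P}

lemma tr2_bdd {V : Type*} [Fintype V] (G : SimpleGraph V) :
    BddAbove {k | ∃ P : Fin k → Set V, TwoTransPart G k P} := by
  refine ⟨Fintype.card V, ?_⟩
  rintro k ⟨P, hne, huniq, -⟩
  choose x hx using hne
  have hinj : Function.Injective x := by
    intro i j h
    obtain ⟨i', hi', hu⟩ := huniq (x i)
    have h2 : x i ∈ P j := by rw [h]; exact hx j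
    rw [hu i (hx i), hu j h2]
  calc k = Fintype.card (Fin k) := (Fintype.card_fin k).symm
    _ ≤ Fintype.card V := Fintype.card_le_of_injective x hinj

lemma upper_aux {V : Type*} [Fintype V] (G : SimpleGraph V) (S K : Set V)
    (hcover : S ∪ K = Set.univ)
    (hS : ∀ u ∈ S, ∀ v ∈ S, ¬ G.Adj u v)
    {k : ℕ} {P : Fin k → Set V} (hP : TwoTransPart G k P) :
    k ≤ (K.ncard + 1) / 2 + 1 := by
  classical
  obtain ⟨hne, huniq, htr⟩ := hP
  by_cases hk : k ≤ 1
  · omega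
  push_neg at hk
  -- basic facts
  have hmemK : ∀ v : V, v ∉ S → v ∈ K := by
    intro v hv
    have : v ∈ S ∪ K := hcover ▸ Set.mem_univ v
    rcases this with h | h
    · exact absurd h hv
    · exact h
  have hnbrK : ∀ u ∈ S, ∀ w, G.Adj w u → w ∈ K := by
    intro u hu w hw
    by_contra hwK
    have hwS : w ∈ S := by
      by_contra h; exact hwK (hmemK w h)
    exact hS w hwS u hu hw
  have hlt : k - 1 < k := by omega
  set last : Fin k := ⟨k - 1, hlt⟩ with hlast
  have hlastv : last.1 = k - 1 := rfl
  have hlast_lt : ∀ i : Fin k, i ≠ last → i < last := by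
    intro i hi
    have : i.1 ≠ k - 1 := fun h => hi (Fin.ext h)
    exact Fin.lt_def.mpr (by omega)

  -- the function counting clique vertices in each part
  set c : Fin k → ℕ := fun i => (P i ∩ K).ncard with hc
  -- sum of c over all parts is at most |K|
  have hsum : ∑ i, c i ≤ K.ncard := by
    set A : Fin k → Finset V := fun i => (Set.toFinite (P i ∩ K)).toFinset with hA
    have hcard : ∀ i, c i = (A i).card := by
      intro i; exact Set.ncard_eq_toFinset_card _ _
    have hdisjA : ∀ i ∈ (Finset.univ : Finset (Fin k)), ∀ j ∈ Finset.univ, i ≠ j →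
        Disjoint (A i) (A j) := by
      intro i _ j _ hij
      rw [Finset.disjoint_left]
      intro a hai haj
      rw [hA, Set.Finite.mem_toFinset] at hai haj
      obtain ⟨i', -, hu⟩ := huniq a
      exact hij ((hu i hai.1).trans (hu j haj.1).symm)
    have hsub : Finset.univ.biUnion A ⊆ (Set.toFinite K).toFinset := by
      intro a ha
      rw [Finset.mem_biUnion] at ha
      obtain ⟨i, -, hai⟩ := ha
      rw [hA, Set.Finite.mem_toFinset] at hai
      rw [Set.Finite.mem_toFinset]
      exact hai.2
    calc ∑ i, c i = ∑ i, (A i).card := by simp [hcard]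
      _ = (Finset.univ.biUnion A).card := (Finset.card_biUnion hdisjA).symm
      _ ≤ (Set.toFinite K).toFinset.card := Finset.card_le_card hsub
      _ = K.ncard := (Set.ncard_eq_toFinset_card _ _).symm
  -- two in a set
  have two_le : ∀ i : Fin k, ∀ u w, u ∈ P i ∩ K → w ∈ P i ∩ K → u ≠ w → 2 ≤ c i := by
    intro i u w hu hw huw
    have : 1 < (P i ∩ K).ncard := by
      rw [Set.one_lt_ncard_iff (Set.toFinite _)]
      exact ⟨u, w, hu, hw, huw⟩
    exact this
  -- key claim: there is an exceptional index m such that every other non-last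
  -- part has ≥ 2 clique vertices, and if m ≠ last then last has ≥ 1.
  have key : ∃ m : Fin k, (∀ i, i ≠ m → i ≠ last → 2 ≤ c i) ∧
      (m ≠ last → 1 ≤ c last) := by
    by_cases hSlast : (P last ∩ S).Nonempty
    · -- last part contains an S-vertex s; all its neighbours are clique vertices
      obtain ⟨s, hsP, hsS⟩ := hSlast
      refine ⟨last, fun i _ hil => ?_, fun h => absurd rfl h⟩
      obtain ⟨u, w, hu, hw, huw, hadju, hadjw⟩ := htr i last (hlast_lt i hil) s hsP
      exact two_le i u w ⟨hu, hnbrK s hsS u hadju⟩ ⟨hw, hnbrK s hsS w hadjw⟩ huw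
    · -- last part is inside K
      obtain ⟨v, hvP⟩ := hne last
      have hvK : v ∈ K := by
        apply hmemK
        intro hvS
        exact hSlast ⟨v, hvP, hvS⟩
      have hclast : 1 ≤ c last := by
        have : (P last ∩ K).Nonempty := ⟨v, hvP, hvK⟩
        exact this.ncard_pos (Set.toFinite _)
      by_cases hallS : ∃ i : Fin k, (P i ∩ S).Nonempty
      · -- take the largest index whose part meets S
        set T : Finset (Fin k) := Finset.univ.filter (fun i => (P i ∩ S).Nonempty) with hT
        have hTne : T.Nonempty := by
          obtain ⟨i, hi⟩ := hallS
          exact ⟨i, by simp [hT, hi]⟩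
        set m : Fin k := T.max' hTne with hm
        have hmS : (P m ∩ S).Nonempty := by
          have := T.max'_mem hTne
          simpa [hT] using this
        refine ⟨m, fun i him hil => ?_, fun _ => hclast⟩
        rcases lt_or_gt_of_ne him with hlt' | hgt
        · -- i < m : use the S-vertex in P m
          obtain ⟨s, hsP, hsS⟩ := hmS
          obtain ⟨u, w, hu, hw, huw, hadju, hadjw⟩ := htr i m hlt' s hsP
          exact two_le i u w ⟨hu, hnbrK s hsS u hadju⟩ ⟨hw, hnbrK s hsS w hadjw⟩ huw
        · -- i > m : part P i contains no S-vertex, use v ∈ P last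
          have hiS : ∀ x ∈ P i, x ∉ S := by
            intro x hx hxS
            have : i ∈ T := by simp [hT]; exact ⟨x, hx, hxS⟩
            exact absurd (T.le_max' i this) (not_le.mpr hgt)
          obtain ⟨u, w, hu, hw, huw, hadju, hadjw⟩ := htr i last (hlast_lt i hil) v hvP
          exact two_le i u w ⟨hu, hmemK u (hiS u hu)⟩ ⟨hw, hmemK w (hiS w hw)⟩ huw
      · -- no part meets S at all
        push_neg at hallS
        refine ⟨last, fun i _ hil => ?_, fun h => absurd rfl h⟩
        obtain ⟨u, w, hu, hw, huw, hadju, hadjw⟩ := htr i last (hlast_lt i hil) v hvP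
        have huS : u ∉ S := fun h => Set.eq_empty_iff_forall_notMem.mp (hallS i) u ⟨hu, h⟩
        have hwS : w ∉ S := fun h => Set.eq_empty_iff_forall_notMem.mp (hallS i) w ⟨hw, h⟩
        exact two_le i u w ⟨hu, hmemK u huS⟩ ⟨hw, hmemK w hwS⟩ huw
  obtain ⟨m, hm2, hmlast⟩ := key
  by_cases hmeq : m = last
  · -- all non-last parts have ≥ 2 : 2(k-1) ≤ |K|
    have h1 : 2 * (k - 1) ≤ ∑ i, c i := by
      calc 2 * (k - 1) = (Finset.univ.erase last).card * 2 := by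
            rw [Finset.card_erase_of_mem (Finset.mem_univ _), Finset.card_univ,
              Fintype.card_fin]; ring
        _ ≤ ∑ i ∈ Finset.univ.erase last, c i := by
            rw [← smul_eq_mul]
            apply Finset.card_nsmul_le_sum
            intro i hi
            exact hm2 i (hmeq ▸ (Finset.mem_erase.mp hi).1) (Finset.mem_erase.mp hi).1
        _ ≤ ∑ i, c i := Finset.sum_le_sum_of_subset (Finset.subset_univ _)
    omega
  · have hlm : 1 ≤ c last := hmlast hmeq
    have h1 : 2 * (k - 2) + 1 ≤ ∑ i, c i := by
      have hlmem : last ∈ Finset.univ.erase m :=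
        Finset.mem_erase.mpr ⟨fun h => hmeq h.symm, Finset.mem_univ _⟩
      have hcard2 : ((Finset.univ.erase m).erase last).card = k - 2 := by
        rw [Finset.card_erase_of_mem hlmem, Finset.card_erase_of_mem (Finset.mem_univ _),
          Finset.card_univ, Fintype.card_fin]
        omega
      calc 2 * (k - 2) + 1 = ((Finset.univ.erase m).erase last).card * 2 + 1 := by
            rw [hcard2]; ring
        _ ≤ (∑ i ∈ (Finset.univ.erase m).erase last, c i) + c last := by
            gcongr
            · rw [← smul_eq_mul]
              apply Finset.card_nsmul_le_sum
              intro i hi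
              rw [Finset.mem_erase, Finset.mem_erase] at hi
              exact hm2 i hi.2.1 hi.1
        _ = ∑ i ∈ Finset.univ.erase m, c i := Finset.sum_erase_add _ _ hlmem
        _ ≤ ∑ i, c i := Finset.sum_le_sum_of_subset (Finset.subset_univ _)
    omega

lemma lower_aux {V : Type*} [Fintype V] (G : SimpleGraph V) (S K : Set V)
    (hdisj : Disjoint S K) (hcover : S ∪ K = Set.univ)
    (hK : ∀ u ∈ K, ∀ v ∈ K, u ≠ v → G.Adj u v) (hn : K.ncard ≠ 0) :
    ∃ P : Fin ((K.ncard + 1) / 2) → Set V, TwoTransPart G ((K.ncard + 1) / 2) P := by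
  classical
  set n := K.ncard with hndef
  set k₀ := (n + 1) / 2 with hk₀
  have hKfin : K.Finite := Set.toFinite K
  haveI : Fintype K := hKfin.fintype
  have hcard : Fintype.card K = n := by
    rw [hndef, ← Nat.card_coe_set_eq, Nat.card_eq_fintype_card]
  set e : Fin n ≃ K := (Fintype.equivFinOfCardEq hcard).symm with he
  set f : Fin n → V := fun t => (e t : V) with hf
  have hfinj : Function.Injective f := by
    intro a b h
    exact e.injective (Subtype.ext h)
  have hfK : ∀ t, f t ∈ K := fun t => (e t).2
  have hfsurj : ∀ v ∈ K, ∃ t, f t = v := by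
    intro v hv
    exact ⟨e.symm ⟨v, hv⟩, by simp [hf]⟩
  set P : Fin k₀ → Set V :=
    fun i => (f '' {t : Fin n | t.1 / 2 = i.1}) ∪ (if i.1 = 0 then S else ∅) with hP
  refine ⟨P, ?_, ?_, ?_⟩
  · -- nonempty
    intro i
    have h2i : 2 * i.1 < n := by
      have := i.2
      omega
    refine ⟨f ⟨2 * i.1, h2i⟩, Or.inl ⟨⟨2 * i.1, h2i⟩, by simp only [Set.mem_setOf_eq]; omega, rfl⟩⟩
  · -- exactly one part
    intro v
    have hv : v ∈ S ∪ K := hcover ▸ Set.mem_univ v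
    have hk₀pos : 0 < k₀ := by omega
    rcases hv with hvS | hvK
    · refine ⟨⟨0, hk₀pos⟩, Or.inr (by simp [hvS]), ?_⟩
      intro j hj
      rcases hj with hj | hj
      · obtain ⟨t, -, hft⟩ := hj
        exact absurd (hft ▸ hfK t) (Set.disjoint_left.mp hdisj hvS)
      · by_cases h0 : j.1 = 0
        · exact Fin.ext h0
        · simp [h0] at hj
    · obtain ⟨t, hft⟩ := hfsurj v hvK
      have ht2 : t.1 / 2 < k₀ := by
        have := t.2
        omega
      refine ⟨⟨t.1 / 2, ht2⟩, Or.inl ⟨t, by simp, hft⟩, ?_⟩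
      intro j hj
      have hvnS : v ∉ S := fun h => Set.disjoint_left.mp hdisj h hvK
      rcases hj with hj | hj
      · obtain ⟨t', ht', hft'⟩ := hj
        have : t' = t := hfinj (hft'.trans hft.symm)
        apply Fin.ext
        simp only [Set.mem_setOf_eq] at ht'
        rw [← ht', this]
      · by_cases h0 : j.1 = 0
        · rw [h0] at hj; simp at hj; exact absurd hj hvnS
        · simp [h0] at hj
  · -- 2-transitivity
    intro i j hij v hv
    have hj0 : j.1 ≠ 0 := by
      have := Fin.lt_def.mp hij
      omega
    have hvim : v ∈ f '' {t : Fin n | t.1 / 2 = j.1} := by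
      rcases hv with h | h
      · exact h
      · simp [hj0] at h
    obtain ⟨tv, htv, hftv⟩ := hvim
    simp only [Set.mem_setOf_eq] at htv
    have hvK : v ∈ K := hftv ▸ hfK tv
    have hijlt : i.1 < j.1 := Fin.lt_def.mp hij
    have ha : 2 * i.1 < n := by
      have h1 : 2 * j.1 ≤ tv.1 := by omega
      have := tv.2
      omega
    have hb : 2 * i.1 + 1 < n := by
      have h1 : 2 * j.1 ≤ tv.1 := by omega
      have := tv.2
      omega
    set u : V := f ⟨2 * i.1, ha⟩ with hu
    set w : V := f ⟨2 * i.1 + 1, hb⟩ with hw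
    have huP : u ∈ P i := Or.inl ⟨⟨2 * i.1, ha⟩, by simp only [Set.mem_setOf_eq]; omega, rfl⟩
    have hwP : w ∈ P i := Or.inl ⟨⟨2 * i.1 + 1, hb⟩, by simp only [Set.mem_setOf_eq]; omega, rfl⟩
    have huv : u ≠ v := by
      intro h
      have := hfinj (h.trans hftv.symm)
      have : 2 * i.1 = tv.1 := congrArg Fin.val this
      omega
    have hwv : w ≠ v := by
      intro h
      have := hfinj (h.trans hftv.symm)
      have : 2 * i.1 + 1 = tv.1 := congrArg Fin.val this
      omega
    have huw : u ≠ w := by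
      intro h
      have := hfinj h
      have : 2 * i.1 = 2 * i.1 + 1 := congrArg Fin.val this
      omega
    exact ⟨u, w, huP, hwP, huw, hK u (hfK _) v hvK huv, hK w (hfK _) v hvK hwv⟩

theorem stmt15 {V : Type*} [Fintype V] (G : SimpleGraph V) (S K : Set V)
    (hdisj : Disjoint S K) (hcover : S ∪ K = Set.univ)
    (hS : ∀ u ∈ S, ∀ v ∈ S, ¬ G.Adj u v)
    (hK : ∀ u ∈ K, ∀ v ∈ K, u ≠ v → G.Adj u v)
    (hmax : ∀ t : Set V, (∀ u ∈ t, ∀ v ∈ t, u ≠ v → G.Adj u v) → t.ncard ≤ K.ncard) :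
    (K.ncard + 1) / 2 ≤ tr2 G ∧ tr2 G ≤ (K.ncard + 1) / 2 + 1 := by
  constructor
  · by_cases hn : K.ncard = 0
    · simp [hn]
    · exact le_csSup (tr2_bdd G) (lower_aux G S K hdisj hcover hK hn)
  · exact csSup_le' (fun k hk => by
      obtain ⟨P, hP⟩ := hk
      exact upper_aux G S K hcover hS hP)
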